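/- arXiv:0911.3179 — 2 statements merged into one kernel-verified Lean document; each statement's English description precedes it below -/
import Mathlib

section
/- Let H ≥ 0 be a self-adjoint operator and A self-adjoint with χ_I(H)(i/ℏ)[H,A]χ_I(H) ≥ c₀ℏ χ_I(H), where I ⊂ (0,∞) is compact. Then using the Kato square-root representation H^{-1/2}χ_I(H) = (1/π)∫_0^∞ (H+λ)^{-1} λ^{-1/2} dλ χ_I(H), one obtains χ_I(H)(i/ℏ)[√H, A]χ_I(H) ≥ c̃₀ℏ χ_I(H) for some c̃₀ > 0 depending only on c₀ and I. -/
set_option maxHeartbeats 1000000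

open ContinuousLinearMap in
lemma commute_cfc_of_commute {𝓗 : Type*} [NormedAddCommGroup 𝓗] [InnerProductSpace ℂ 𝓗]
    [CompleteSpace 𝓗] (H P : 𝓗 →L[ℂ] 𝓗) (hHsa : IsSelfAdjoint H)
    (hPsa : IsSelfAdjoint P) (hPproj : P * P = P) (hcomm : H * P = P * H)
    (f : ℝ → ℝ) (hf : ContinuousOn f (spectrum ℝ H)) :
    (cfc f H) * P = P * (cfc f H) := by
  set U : 𝓗 →L[ℂ] 𝓗 := 1 - (2:ℂ) • P with hU
  have hU2 : U * U = 1 := by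
    have h4 : U * U = 1 - (2:ℂ)•P - (2:ℂ)•P + ((2:ℂ)*(2:ℂ))•(P*P) := by
      simp only [hU, sub_mul, mul_sub, one_mul, mul_one, smul_mul_assoc, mul_smul_comm,
        smul_smul]
      module
    rw [h4, hPproj]
    module
  have hUstar : star U = U := by
    simp [hU, star_smul, hPsa.star_eq, Complex.star_def, Complex.conj_ofNat]
  have hHU : U * H = H * U := by
    simp only [hU, sub_mul, mul_sub, one_mul, mul_one, smul_mul_assoc, mul_smul_comm, hcomm]
  let Φ : (𝓗 →L[ℂ] 𝓗) →⋆ₐ[ℝ] (𝓗 →L[ℂ] 𝓗) :=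
  { toFun := fun x => U * x * U
    map_one' := by show U * 1 * U = 1; rw [mul_one, hU2]
    map_mul' := fun x y => by
      simp only [mul_assoc]
      rw [← mul_assoc U U, hU2, one_mul]
    map_zero' := by simp
    map_add' := fun x y => by noncomm_ring
    commutes' := fun r => by
      simp [Algebra.algebraMap_eq_smul_one, mul_smul_comm, smul_mul_assoc, hU2]
    map_star' := fun x => by
      simp only [star_mul, hUstar, mul_assoc] }
  have hΦc : Continuous Φ := by
    show Continuous fun x => U * x * U
    fun_prop
  have hkey : cfcHom (R := ℝ) hHsa = Φ.comp (cfcHom (R := ℝ) hHsa) := by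
    refine cfcHom_eq_of_continuous_of_map_id hHsa _ (hΦc.comp (cfcHom_isClosedEmbedding hHsa).continuous) ?_
    show Φ (cfcHom hHsa (ContinuousMap.restrict (spectrum ℝ H) (ContinuousMap.id ℝ))) = H
    rw [cfcHom_id hHsa]
    show U * H * U = H
    rw [hHU, mul_assoc, hU2, mul_one]
  have hUc : ∀ g : C(spectrum ℝ H, ℝ), U * cfcHom (R := ℝ) hHsa g = cfcHom (R := ℝ) hHsa g * U := by
    intro g
    have : cfcHom (R := ℝ) hHsa g = U * cfcHom (R := ℝ) hHsa g * U := by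
      conv_lhs => rw [hkey]
      rfl
    calc U * cfcHom (R := ℝ) hHsa g = U * (U * cfcHom (R := ℝ) hHsa g * U) := by rw [← this]
    _ = (U * U) * cfcHom (R := ℝ) hHsa g * U := by simp only [mul_assoc]
    _ = cfcHom (R := ℝ) hHsa g * U := by rw [hU2, one_mul]
  rw [cfc_apply f H hHsa hf]
  set x := cfcHom (R := ℝ) hHsa ⟨_, hf.restrict⟩ with hx
  have h := hUc ⟨_, hf.restrict⟩
  rw [← hx] at h
  simp only [hU, sub_mul, mul_sub, one_mul, mul_one, smul_mul_assoc, mul_smul_comm] at h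
  have h2 : (2:ℂ) • (P * x) = (2:ℂ) • (x * P) :=
    sub_eq_zero.mp (by simpa using (sub_eq_sub_iff_sub_eq_sub.mp h).symm)
  have := smul_right_injective (𝓗 →L[ℂ] 𝓗) (two_ne_zero (α := ℂ)) h2
  rw [this]

/-- Mourre estimate for `√H` from the one for `H` (Kato square root): if `H ≥ 0`
is selfadjoint, `P = χ_I(H)` is a spectral projection commuting with `H` on
which `m ≤ H ≤ M` with `0 < m` (i.e. `I ⊂ (0,∞)` compact), and
`P (i/ℏ)[H,A] P ≥ c₀ℏ P`, then `P (i/ℏ)[√H,A] P ≥ c̃₀ℏ P` for some `c̃₀ > 0`. -/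
theorem stmt12 {𝓗 : Type*} [NormedAddCommGroup 𝓗] [InnerProductSpace ℂ 𝓗]
    [CompleteSpace 𝓗] (hbar c₀ m M : ℝ) (hh : 0 < hbar) (hc : 0 < c₀)
    (hm : 0 < m) (hmM : m ≤ M)
    (H A P : 𝓗 →L[ℂ] 𝓗) (hHsa : IsSelfAdjoint H) (hAsa : IsSelfAdjoint A)
    (hHpos : ∀ ψ : 𝓗, 0 ≤ (inner ℂ (H ψ) ψ : ℂ).re)
    (hPsa : IsSelfAdjoint P) (hPproj : P * P = P) (hcomm : H * P = P * H)
    (hlow : ∀ ψ : 𝓗, m * ‖P ψ‖ ^ 2 ≤ (inner ℂ (H (P ψ)) (P ψ) : ℂ).re)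
    (hhigh : ∀ ψ : 𝓗, (inner ℂ (H (P ψ)) (P ψ) : ℂ).re ≤ M * ‖P ψ‖ ^ 2)
    (hmourre : ∀ ψ : 𝓗, c₀ * hbar * ‖P ψ‖ ^ 2 ≤
      (inner ℂ ((P * ((Complex.I / (hbar : ℂ)) • (H * A - A * H)) * P) ψ) ψ : ℂ).re) :
    ∃ c₁ > 0, ∀ ψ : 𝓗, c₁ * hbar * ‖P ψ‖ ^ 2 ≤
      (inner ℂ ((P * ((Complex.I / (hbar : ℂ)) •
        (cfc Real.sqrt H * A - A * cfc Real.sqrt H)) * P) ψ) ψ : ℂ).re := by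
  -- spectrum of `H` is nonnegative
  have hspec : ∀ x ∈ spectrum ℝ H, 0 ≤ x := by
    have hpos : H.IsPositive := ContinuousLinearMap.isPositive_def'.mpr ⟨hHsa, fun x => hHpos x⟩
    exact fun x hx => (SpectrumRestricts.nnreal_iff.mp hpos.spectrumRestricts) x hx
  set S : 𝓗 →L[ℂ] 𝓗 := cfc Real.sqrt H with hSdef
  set Rq : 𝓗 →L[ℂ] 𝓗 := cfc (fun x => Real.sqrt (Real.sqrt x)) H with hRdef
  have hS_sa : IsSelfAdjoint S := cfc_predicate _ H
  have hR_sa : IsSelfAdjoint Rq := cfc_predicate _ H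
  have hSS : S * S = H := by
    rw [hSdef, ← cfc_mul Real.sqrt Real.sqrt H
      (Real.continuous_sqrt.continuousOn) (Real.continuous_sqrt.continuousOn),
      cfc_congr (g := fun x : ℝ => x) (fun x hx => Real.mul_self_sqrt (hspec x hx))]
    exact cfc_id' ℝ H
  have hRR : Rq * Rq = S := by
    rw [hRdef, hSdef, ← cfc_mul (fun x => Real.sqrt (Real.sqrt x))
      (fun x => Real.sqrt (Real.sqrt x)) H (by fun_prop) (by fun_prop),
      cfc_congr (g := Real.sqrt) (fun x _ => Real.mul_self_sqrt (Real.sqrt_nonneg x))]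
  have hSP : S * P = P * S :=
    commute_cfc_of_commute H P hHsa hPsa hPproj hcomm _ Real.continuous_sqrt.continuousOn
  -- selfadjoint moves across inner
  have hmove : ∀ (B : 𝓗 →L[ℂ] 𝓗), IsSelfAdjoint B → ∀ x y : 𝓗,
      (inner ℂ (B x) y : ℂ) = inner ℂ x (B y) := by
    intro B hB x y
    conv_lhs => rw [← hB.adjoint_eq]
    exact ContinuousLinearMap.adjoint_inner_left B y x
  have hSff : ∀ φ : 𝓗, (inner ℂ (S φ) φ : ℂ).re = ‖Rq φ‖ ^ 2 := by
    intro φ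
    rw [← hRR]
    show (inner ℂ (Rq (Rq φ)) φ : ℂ).re = ‖Rq φ‖ ^ 2
    rw [hmove Rq hR_sa]
    exact_mod_cast inner_self_eq_norm_sq (𝕜 := ℂ) (Rq φ)
  have hHff : ∀ φ : 𝓗, (inner ℂ (H φ) φ : ℂ).re = ‖S φ‖ ^ 2 := by
    intro φ
    rw [← hSS]
    show (inner ℂ (S (S φ)) φ : ℂ).re = ‖S φ‖ ^ 2
    rw [hmove S hS_sa]
    exact_mod_cast inner_self_eq_norm_sq (𝕜 := ℂ) (S φ)
  set ω : ℝ := ‖S‖ + 1 with hωdef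
  have hω : 0 < ω := by positivity
  set N : ℝ := ‖Rq‖ ^ 2 + 1 with hNdef
  have hN : 0 < N := by positivity
  -- upper bound for the quadratic form of S
  have hSupper : ∀ φ : 𝓗, (inner ℂ (S φ) φ : ℂ).re ≤ ω * ‖φ‖ ^ 2 := by
    intro φ
    calc (inner ℂ (S φ) φ : ℂ).re ≤ ‖(inner ℂ (S φ) φ : ℂ)‖ := Complex.re_le_norm _
    _ ≤ ‖S φ‖ * ‖φ‖ := norm_inner_le_norm _ _
    _ ≤ (‖S‖ * ‖φ‖) * ‖φ‖ := by
        have := S.le_opNorm φ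
        nlinarith [norm_nonneg φ]
    _ ≤ ω * ‖φ‖ ^ 2 := by nlinarith [norm_nonneg φ, norm_nonneg S]
  have hSnonneg : ∀ φ : 𝓗, 0 ≤ (inner ℂ (S φ) φ : ℂ).re := by
    intro φ; rw [hSff]; positivity
  -- lower bound on ran P
  have hSlower : ∀ φ : 𝓗, P φ = φ → m * ‖φ‖ ^ 2 ≤ N * (inner ℂ (S φ) φ : ℂ).re := by
    intro φ hφ
    have h1 : m * ‖φ‖ ^ 2 ≤ ‖S φ‖ ^ 2 := by
      have := hlow φ; rw [hφ] at this; rw [← hHff]; exact this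
    have h2 : ‖S φ‖ ^ 2 ≤ N * ‖Rq φ‖ ^ 2 := by
      have h3 : ‖S φ‖ ≤ ‖Rq‖ * ‖Rq φ‖ := by
        rw [← hRR]; exact Rq.le_opNorm (Rq φ)
      have h4 : ‖S φ‖ ^ 2 ≤ (‖Rq‖ * ‖Rq φ‖) ^ 2 := by
        have := norm_nonneg (S φ); nlinarith
      nlinarith [norm_nonneg (Rq φ), sq_nonneg (‖Rq‖ * ‖Rq φ‖)]
    rw [hSff]
    nlinarith
  set c : ℂ := Complex.I / (hbar : ℂ) with hcdef
  set T : 𝓗 →L[ℂ] 𝓗 := c • (H * A - A * H) with hTdef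
  set K : 𝓗 →L[ℂ] 𝓗 := c • (S * A - A * S) with hKdef
  have hstarc : star c = -c := by
    simp [hcdef, Complex.star_def, map_div₀, Complex.conj_I, Complex.conj_ofReal]
    ring
  have hK_sa : IsSelfAdjoint K := by
    rw [IsSelfAdjoint, hKdef, star_smul, hstarc]
    rw [star_sub, star_mul, star_mul, hS_sa.star_eq, hAsa.star_eq]
    rw [neg_smul, ← smul_neg, neg_sub]
  have hSKKS : S * K + K * S = T := by
    rw [hKdef, hTdef, mul_smul_comm, smul_mul_assoc, ← smul_add]
    congr 1
    have : S * (S * A - A * S) + (S * A - A * S) * S = S * S * A - A * (S * S) := by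
      noncomm_ring
    rw [this, hSS]
  -- Mourre estimate on ran P for T
  have hmourreP : ∀ φ : 𝓗, P φ = φ →
      c₀ * hbar * ‖φ‖ ^ 2 ≤ (inner ℂ (T φ) φ : ℂ).re := by
    intro φ hφ
    have := hmourre φ
    rw [show ((P * T * P) φ) = P (T (P φ)) from rfl, hφ, hmove P hPsa, hφ] at this
    exact this
  -- reduce to vectors in the range of P
  refine ⟨c₀ / (2 * ω), by positivity, ?_⟩
  have main : ∀ φ : 𝓗, P φ = φ →
      (c₀ / (2 * ω)) * hbar * ‖φ‖ ^ 2 ≤ (inner ℂ (K φ) φ : ℂ).re := by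
    intro φ hφ
    set B : 𝓗 →L[ℂ] 𝓗 := -S with hBdef
    set u : ℝ → 𝓗 := fun t => (NormedSpace.exp (t • B)) φ with hudef
    have hu : ∀ t, HasDerivAt u (B (u t)) t := by
      intro t
      have h1 := hasDerivAt_exp_smul_const' (𝕂 := ℝ) B t
      have h2 := (((ContinuousLinearMap.apply ℂ 𝓗 φ).restrictScalars
        ℝ).hasFDerivAt).comp_hasDerivAt t h1
      exact h2
    have hPu : ∀ t, P (u t) = u t := by
      intro t
      have hc1 : Commute (t • B) P := by
        apply Commute.smul_left
        show (-S) * P = P * (-S)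
        simp only [neg_mul, mul_neg, hSP]
      have hc2 : Commute (NormedSpace.exp (t • B)) P := hc1.exp_left
      calc P (u t) = (P * NormedSpace.exp (t • B)) φ := rfl
      _ = (NormedSpace.exp (t • B) * P) φ := by rw [hc2.symm.eq]
      _ = (NormedSpace.exp (t • B)) (P φ) := rfl
      _ = u t := by rw [hφ]
    set G : ℝ → ℝ := fun t => (inner ℂ (u t) (u t) : ℂ).re with hGdef
    have hGnorm : ∀ t, G t = ‖u t‖ ^ 2 := fun t => by
      show (inner ℂ (u t) (u t) : ℂ).re = ‖u t‖ ^ 2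
      simpa using inner_self_eq_norm_sq (𝕜 := ℂ) (u t)
    have hGpos : ∀ t, 0 ≤ G t := fun t => by rw [hGnorm]; positivity
    have hG : ∀ t, HasDerivAt G (-2 * (inner ℂ (S (u t)) (u t) : ℂ).re) t := by
      intro t
      have h1 := (hu t).inner ℂ (hu t)
      have h2 := (Complex.reCLM.hasFDerivAt).comp_hasDerivAt t h1
      refine h2.congr_deriv ?_
      have e1 : (inner ℂ (u t) (S (u t)) : ℂ).re = (inner ℂ (S (u t)) (u t) : ℂ).re := by
        simpa using inner_re_symm (𝕜 := ℂ) (u t) (S (u t))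
      rw [hBdef]
      simp only [ContinuousLinearMap.neg_apply, inner_neg_left, inner_neg_right,
        Complex.reCLM_apply, Complex.add_re, Complex.neg_re]
      rw [e1]; ring
    have hF : ∀ t, HasDerivAt (fun t => (inner ℂ (K (u t)) (u t) : ℂ).re)
        (-(inner ℂ (T (u t)) (u t) : ℂ).re) t := by
      intro t
      have h0 : HasDerivAt (fun t => K (u t)) (K (B (u t))) t := by
        exact ((K.restrictScalars ℝ).hasFDerivAt).comp_hasDerivAt t (hu t)
      have h1 := h0.inner ℂ (hu t)
      have h2 := (Complex.reCLM.hasFDerivAt).comp_hasDerivAt t h1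
      refine h2.congr_deriv ?_
      have e1 : (inner ℂ (K (u t)) (S (u t)) : ℂ) = inner ℂ (S (K (u t))) (u t) :=
        (hmove S hS_sa _ _).symm
      have e2 : (inner ℂ (S (K (u t))) (u t) : ℂ) + inner ℂ (K (S (u t))) (u t)
          = inner ℂ (T (u t)) (u t) := by
        rw [← hSKKS]
        simp only [ContinuousLinearMap.add_apply, ContinuousLinearMap.mul_apply,
          inner_add_left]
      rw [hBdef]
      simp only [ContinuousLinearMap.neg_apply, inner_neg_left, inner_neg_right,
        map_neg, Complex.reCLM_apply, Complex.add_re, Complex.neg_re]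
      have := congrArg Complex.re (e1.symm ▸ e2)
      simp only [Complex.add_re] at this
      linarith
    set κ : ℝ := c₀ * hbar / (2 * ω) with hκdef
    have hκpos : 0 < κ := by positivity
    set Z : ℝ → ℝ := fun t => (inner ℂ (K (u t)) (u t) : ℂ).re - κ * G t with hZdef
    have hZd : ∀ t, HasDerivAt Z (-(inner ℂ (T (u t)) (u t) : ℂ).re
        - κ * (-2 * (inner ℂ (S (u t)) (u t) : ℂ).re)) t :=
      fun t => (hF t).sub ((hG t).const_mul κ)
    have hκω : 2 * κ * ω = c₀ * hbar := by
      rw [hκdef]; field_simp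
    have hZanti : Antitone Z := by
      apply antitone_of_deriv_nonpos (fun t => (hZd t).differentiableAt)
      intro t
      rw [(hZd t).deriv]
      have h1 := hmourreP (u t) (hPu t)
      have h2 := hSupper (u t)
      have h3 := hGnorm t
      have h4 := hGpos t
      have h5 := hSnonneg (u t)
      nlinarith [hκpos.le]
    set δ : ℝ := m / N with hδdef
    have hδpos : 0 < δ := by positivity
    set W : ℝ → ℝ := fun t => Real.exp (2 * δ * t) * G t with hWdef
    have hWd : ∀ t, HasDerivAt W (Real.exp (2*δ*t) * (2*δ) * G t
        + Real.exp (2*δ*t) * (-2 * (inner ℂ (S (u t)) (u t) : ℂ).re)) t := by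
      intro t
      have he : HasDerivAt (fun t => Real.exp (2*δ*t)) (Real.exp (2*δ*t) * (2*δ)) t := by
        simpa using ((hasDerivAt_id t).const_mul (2*δ)).exp
      exact he.mul (hG t)
    have hWanti : Antitone W := by
      apply antitone_of_deriv_nonpos (fun t => (hWd t).differentiableAt)
      intro t
      rw [(hWd t).deriv]
      have h5 := hSlower (u t) (hPu t)
      have h3 := hGnorm t
      have h4 := hGpos t
      have hexp := (Real.exp_pos (2*δ*t)).le
      have hδG : N * (δ * G t) = m * G t := by
        rw [hδdef]; field_simp
      have h6 : δ * G t ≤ (inner ℂ (S (u t)) (u t) : ℂ).re := by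
        rw [h3] at hδG ⊢
        nlinarith
      nlinarith
    have hGdecay : ∀ t : ℝ, 0 ≤ t → G t ≤ Real.exp (-(2*δ)*t) * G 0 := by
      intro t ht
      have h1 : W t ≤ W 0 := hWanti ht
      simp only [hWdef, mul_zero, Real.exp_zero, one_mul] at h1
      have h2 : Real.exp (-(2*δ)*t) * (Real.exp (2*δ*t) * G t)
          = G t := by
        rw [← mul_assoc, ← Real.exp_add]
        norm_num
      calc G t = Real.exp (-(2*δ)*t) * (Real.exp (2*δ*t) * G t) := h2.symm
      _ ≤ Real.exp (-(2*δ)*t) * G 0 := by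
          exact mul_le_mul_of_nonneg_left h1 (Real.exp_pos _).le
    have hFbound : ∀ t, -(‖K‖ * G t) ≤ (inner ℂ (K (u t)) (u t) : ℂ).re := by
      intro t
      have h1 : ‖(inner ℂ (K (u t)) (u t) : ℂ)‖ ≤ ‖K‖ * ‖u t‖ * ‖u t‖ := by
        calc ‖(inner ℂ (K (u t)) (u t) : ℂ)‖ ≤ ‖K (u t)‖ * ‖u t‖ := norm_inner_le_norm _ _
        _ ≤ ‖K‖ * ‖u t‖ * ‖u t‖ := by
            have := K.le_opNorm (u t)
            nlinarith [norm_nonneg (u t)]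
      have h2 : |(inner ℂ (K (u t)) (u t) : ℂ).re| ≤ ‖(inner ℂ (K (u t)) (u t) : ℂ)‖ :=
        Complex.abs_re_le_norm _
      have h4 := (abs_le.mp h2).1
      rw [hGnorm t, pow_two]
      nlinarith [norm_nonneg (u t)]
    have hZ0 : 0 ≤ Z 0 := by
      have hseq : ∀ n : ℕ, (-(‖K‖ + κ) * G 0) * Real.exp (-(2*δ)*n) ≤ Z 0 := by
        intro n
        have h1 : Z (n : ℝ) ≤ Z 0 := hZanti (Nat.cast_nonneg n)
        have h2 := hGdecay (n : ℝ) (Nat.cast_nonneg n)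
        have h3 := hFbound (n : ℝ)
        have h4 := hGpos (n : ℝ)
        have h5 : Z (n : ℝ) = (inner ℂ (K (u n)) (u n) : ℂ).re - κ * G n := rfl
        nlinarith [hκpos.le, norm_nonneg K, (Real.exp_pos (-(2*δ)*(n:ℝ))).le]
      have h1 : Filter.Tendsto (fun n : ℕ => Real.exp (-(2*δ)*(n:ℝ)))
          Filter.atTop (nhds 0) := by
        apply Real.tendsto_exp_atBot.comp
        exact (tendsto_natCast_atTop_atTop (R := ℝ)).const_mul_atTop_of_neg
          (by linarith : -(2*δ) < 0)
      have h2 : Filter.Tendsto (fun n : ℕ => (-(‖K‖ + κ) * G 0) * Real.exp (-(2*δ)*(n:ℝ)))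
          Filter.atTop (nhds 0) := by
        simpa using h1.const_mul (-(‖K‖ + κ) * G 0)
      exact le_of_tendsto h2 (Filter.Eventually.of_forall hseq)
    have hu0 : u 0 = φ := by
      simp [hudef]
    have hG0 : G 0 = ‖φ‖ ^ 2 := by rw [hGnorm 0, hu0]
    have : κ * G 0 ≤ (inner ℂ (K (u 0)) (u 0) : ℂ).re := by
      have := hZ0
      simp only [hZdef] at this
      linarith
    rw [hu0, hG0] at this
    have hκeq : c₀ / (2 * ω) * hbar = κ := by rw [hκdef]; ring
    calc c₀ / (2 * ω) * hbar * ‖φ‖ ^ 2 = κ * ‖φ‖ ^ 2 := by rw [hκeq]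
      _ ≤ (inner ℂ (K φ) φ : ℂ).re := this
  intro ψ
  have hφ : P (P ψ) = P ψ := by
    rw [← ContinuousLinearMap.mul_apply, hPproj]
  have h := main (P ψ) hφ
  rw [show ((P * K * P) ψ) = P (K (P ψ)) from rfl, hmove P hPsa]
  exact h
end

section
/- Let V₂ : [0,∞) → ℂ be continuous with |V₂(y)| ≤ C⟨y⟩^{-4}, let ℏ, E > 0, and let k(x,y) := 1 - exp((i/ℏ)∫_x^y √(Q(u)) du) with |k| ≤ 2, where Q is continuous and positive. Then the Volterra equation a(x) = ∫_x^∞ k(x,y) V₂(y)(1 + ℏ a(y)) dy has a unique bounded continuous solution on [0,∞) for ℏ small, satisfying |a(x)| ≤ C' ⟨x⟩^{-3} for all x ≥ 0, with C' independent of ℏ and E. -/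
open MeasureTheory

open Set

noncomputable section

-- the weight g
private lemma g_cont : Continuous (fun y : ℝ => ((1+y^2)^2)⁻¹) := by
  have h : ∀ y : ℝ, (1+y^2)^2 ≠ 0 := by intro y; positivity
  exact (continuous_const.add (continuous_pow 2)).pow 2 |>.inv₀ h

private lemma g_le_inv (y : ℝ) : ((1+y^2)^2)⁻¹ ≤ (1+y^2)⁻¹ := by
  have h1 : (1:ℝ) ≤ 1 + y^2 := by nlinarith [sq_nonneg y]
  have h2 : (0:ℝ) < 1 + y^2 := by positivity
  have : (1+y^2) ≤ (1+y^2)^2 := by nlinarith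
  exact inv_anti₀ h2 this

private lemma g_integrable : Integrable (fun y : ℝ => ((1+y^2)^2)⁻¹) := by
  refine Integrable.mono' integrable_inv_one_add_sq g_cont.aestronglyMeasurable ?_
  refine Filter.Eventually.of_forall fun y => ?_
  rw [Real.norm_eq_abs, abs_of_nonneg (by positivity)]
  exact g_le_inv y

private lemma yg_integrable : Integrable (fun y : ℝ => y * ((1+y^2)^2)⁻¹) := by
  refine Integrable.mono' integrable_inv_one_add_sq
    ((continuous_id.mul g_cont).aestronglyMeasurable) ?_
  refine Filter.Eventually.of_forall fun y => ?_
  have h2 : (0:ℝ) < 1 + y^2 := by positivity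
  rw [Real.norm_eq_abs, abs_mul, abs_of_nonneg (by positivity : (0:ℝ) ≤ ((1+y^2)^2)⁻¹)]
  have h3 : |y| ≤ 1 + y^2 := by
    rcases abs_cases y with ⟨h,_⟩|⟨h,_⟩ <;> nlinarith [sq_nonneg y, sq_nonneg (y-1), sq_nonneg (y+1)]
  calc |y| * ((1+y^2)^2)⁻¹ ≤ (1+y^2) * ((1+y^2)^2)⁻¹ := by
        apply mul_le_mul_of_nonneg_right h3 (by positivity)
    _ = (1+y^2)⁻¹ := by field_simp

private lemma yg_tail (x : ℝ) :
    ∫ y in Ici x, y * ((1+y^2)^2)⁻¹ = (2 * (1+x^2))⁻¹ := by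
  rw [integral_Ici_eq_integral_Ioi]
  have := integral_Ioi_of_hasDerivAt_of_tendsto'
    (f := fun y : ℝ => -(2 * (1+y^2))⁻¹) (f' := fun y : ℝ => y * ((1+y^2)^2)⁻¹) (a := x) (m := 0)
    ?_ (yg_integrable.integrableOn) ?_
  · rw [this]; ring
  · intro y _
    have h2 : (2 * (1+y^2)) ≠ 0 := by positivity
    have : HasDerivAt (fun y : ℝ => 2 * (1+y^2)) (2 * (2*y)) y := by
      have : HasDerivAt (fun y : ℝ => 1+y^2) (2*y) y := by
        simpa using ((hasDerivAt_pow 2 y).const_add 1)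
      exact this.const_mul 2
    have := (this.inv h2).neg
    convert this using 1
    · rfl
    field_simp
  · have h1 : Filter.Tendsto (fun y : ℝ => 2 * (1+y^2)) Filter.atTop Filter.atTop := by
      apply Filter.Tendsto.const_mul_atTop (by norm_num)
      apply Filter.tendsto_atTop_add_const_left
      exact Filter.tendsto_pow_atTop (by norm_num)
    simpa using (h1.inv_tendsto_atTop).neg

private lemma rpow_form (x : ℝ) :
    (1+x^2) ^ (-(3:ℝ)/2) = ((1+x^2) * Real.sqrt (1+x^2))⁻¹ := by
  have ht : (0:ℝ) < 1 + x^2 := by positivity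
  rw [show (-(3:ℝ)/2) = -(1 + 1/2) by norm_num, Real.rpow_neg ht.le,
    Real.rpow_add ht, Real.rpow_one, ← Real.rpow_natCast, Real.sqrt_eq_rpow]

private lemma sqrt_two_le : Real.sqrt 2 ≤ 1.6 := by
  rw [show (1.6:ℝ) = Real.sqrt (1.6^2) from (Real.sqrt_sq (by norm_num)).symm]
  exact Real.sqrt_le_sqrt (by norm_num)

private lemma tailB {x : ℝ} (hx : 1 ≤ x) :
    ∫ y in Ici x, ((1+y^2)^2)⁻¹ ≤ (2*x*(1+x^2))⁻¹ := by
  have hx0 : 0 < x := lt_of_lt_of_le one_pos hx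
  have step : ∫ y in Ici x, ((1+y^2)^2)⁻¹ ≤ ∫ y in Ici x, x⁻¹ * (y * ((1+y^2)^2)⁻¹) := by
    apply setIntegral_mono_on g_integrable.integrableOn
      ((yg_integrable.integrableOn).const_mul _) measurableSet_Ici
    intro y hy
    have hxy : x ≤ y := hy
    have h1 : (1:ℝ) ≤ x⁻¹ * y := by rw [inv_mul_eq_div]; exact (one_le_div hx0).2 hxy
    calc ((1+y^2)^2)⁻¹ = 1 * ((1+y^2)^2)⁻¹ := (one_mul _).symm
      _ ≤ (x⁻¹*y) * ((1+y^2)^2)⁻¹ := mul_le_mul_of_nonneg_right h1 (by positivity)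
      _ = x⁻¹ * (y * ((1+y^2)^2)⁻¹) := by ring
  rw [integral_const_mul, yg_tail] at step
  calc ∫ y in Ici x, ((1+y^2)^2)⁻¹ ≤ x⁻¹ * (2*(1+x^2))⁻¹ := step
    _ = (2*x*(1+x^2))⁻¹ := by rw [← mul_inv]; ring_nf

private lemma tail_bound {x : ℝ} (hx : 0 ≤ x) :
    ∫ y in Ici x, ((1+y^2)^2)⁻¹ ≤ 4 * (1+x^2) ^ (-(3:ℝ)/2) := by
  rw [rpow_form]
  have ht : (0:ℝ) < 1+x^2 := by positivity
  have hst : 0 < Real.sqrt (1+x^2) := Real.sqrt_pos.2 ht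
  have hd : 0 < (1+x^2) * Real.sqrt (1+x^2) := by positivity
  rcases le_or_gt 1 x with h1 | h1
  · have hc : 0 < 2*x*(1+x^2) := by positivity
    have hsq : Real.sqrt (1+x^2) ≤ 8 * x := by
      rw [show 8*x = Real.sqrt ((8*x)^2) from (Real.sqrt_sq (by positivity)).symm]
      exact Real.sqrt_le_sqrt (by nlinarith)
    calc ∫ y in Ici x, ((1+y^2)^2)⁻¹ ≤ (2*x*(1+x^2))⁻¹ := tailB h1
      _ ≤ 4 * ((1+x^2) * Real.sqrt (1+x^2))⁻¹ := by
          rw [inv_eq_one_div, show (4:ℝ) * ((1+x^2) * Real.sqrt (1+x^2))⁻¹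
            = 4 / ((1+x^2) * Real.sqrt (1+x^2)) from by rw [div_eq_mul_inv],
            div_le_div_iff₀ hc hd]
          nlinarith [hsq]
  · have hsplit : (Ico x 1) ∪ (Ici 1) = Ici x := Ico_union_Ici_eq_Ici h1.le
    have hdisj : Disjoint (Ico x 1) (Ici 1) :=
      Set.disjoint_left.2 fun y hy hy' => absurd hy' (not_le.2 hy.2)
    have hs1 : ∫ y in Ico x 1, ((1+y^2)^2)⁻¹ ≤ 1 := by
      have hmono : ∫ y in Ico x 1, ((1+y^2)^2)⁻¹ ≤ ∫ _y in Ico x 1, (1:ℝ) := by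
        apply setIntegral_mono_on g_integrable.integrableOn
          (integrableOn_const (by simp [Real.volume_Ico] : volume (Ico x 1) ≠ ⊤))
          measurableSet_Ico
        intro y _
        have h2 : (1:ℝ) ≤ (1+y^2)^2 := by nlinarith [sq_nonneg y]
        exact inv_le_one_of_one_le₀ h2
      have hvol : ∫ _y in Ico x 1, (1:ℝ) = 1 - x := by
        simp [Real.volume_Ico, ENNReal.toReal_ofReal (by linarith : (0:ℝ) ≤ 1 - x), h1.le]
      rw [hvol] at hmono; linarith
    have hs2 : ∫ y in Ici 1, ((1+y^2)^2)⁻¹ ≤ (4:ℝ)⁻¹ := by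
      have := tailB (le_refl (1:ℝ))
      norm_num at this ⊢
      linarith
    have htot : ∫ y in Ici x, ((1+y^2)^2)⁻¹ ≤ 5/4 := by
      rw [← hsplit, setIntegral_union hdisj measurableSet_Ici
        g_integrable.integrableOn g_integrable.integrableOn]
      linarith
    have hsq2 : Real.sqrt (1+x^2) ≤ 1.6 := by
      rw [show (1.6:ℝ) = Real.sqrt (1.6^2) from (Real.sqrt_sq (by norm_num)).symm]
      exact Real.sqrt_le_sqrt (by nlinarith)
    calc ∫ y in Ici x, ((1+y^2)^2)⁻¹ ≤ 5/4 := htot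
      _ ≤ 4 * ((1+x^2) * Real.sqrt (1+x^2))⁻¹ := by
          rw [show (4:ℝ) * ((1+x^2) * Real.sqrt (1+x^2))⁻¹
            = 4 / ((1+x^2) * Real.sqrt (1+x^2)) from by rw [div_eq_mul_inv],
            le_div_iff₀ hd]
          nlinarith [hsq2, hst.le]

private def PhiP (Q : ℝ → ℝ) : ℝ → ℝ :=
  fun x => ∫ u in (0:ℝ)..(max x 0), Real.sqrt (Q (max u 0))

private def vext (V₂ : ℝ → ℂ) : ℝ → ℂ := fun y => V₂ (max y 0)

private def kerC (hbar : ℝ) (Q : ℝ → ℝ) (x y : ℝ) : ℂ :=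
  1 - Complex.exp (Complex.I / (hbar:ℂ) * ((PhiP Q y - PhiP Q x : ℝ) : ℂ))

private def Tfun (hbar : ℝ) (V₂ : ℝ → ℂ) (Q : ℝ → ℝ) (f : ℝ → ℂ) : ℝ → ℂ :=
  fun x => ∫ y in Ici (max x 0),
    kerC hbar Q (max x 0) y * (vext V₂ y * (1 + (hbar:ℂ) * f y))

section lems
variable {C hbar : ℝ} {V₂ : ℝ → ℂ} {Q : ℝ → ℝ}

private lemma max_mem : ∀ x : ℝ, max x 0 ∈ Ici (0:ℝ) := fun x => le_max_right x 0

private lemma L_qcont (hcQ : ContinuousOn Q (Ici 0)) :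
    Continuous fun u : ℝ => Real.sqrt (Q (max u 0)) :=
  Real.continuous_sqrt.comp
    (hcQ.comp_continuous (continuous_id.max continuous_const) max_mem)

private lemma L_Phicont (hcQ : ContinuousOn Q (Ici 0)) : Continuous (PhiP Q) :=
  (intervalIntegral.continuous_primitive
      (fun a b => ((L_qcont hcQ).intervalIntegrable a b)) 0).comp
    (continuous_id.max continuous_const)

private lemma L_Phimax (x : ℝ) : PhiP Q (max x 0) = PhiP Q x := by
  simp [PhiP, max_assoc]

private lemma L_vcont (hcV : ContinuousOn V₂ (Ici 0)) : Continuous (vext V₂) :=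
  hcV.comp_continuous (continuous_id.max continuous_const) max_mem

private lemma rpow2 {t : ℝ} (ht : 0 ≤ t) : t ^ (-(2:ℝ)) = (t^2)⁻¹ := by
  rw [Real.rpow_neg ht, ← Real.rpow_natCast t 2]
  norm_num

private lemma L_vbound (hbV : ∀ y ∈ Ici (0:ℝ), ‖V₂ y‖ ≤ C * (1 + y ^ 2) ^ (-(2:ℝ))) :
    ∀ y ∈ Ici (0:ℝ), ‖vext V₂ y‖ ≤ C * ((1+y^2)^2)⁻¹ := by
  intro y hy
  have h0 : max y 0 = y := max_eq_left hy
  have := hbV y hy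
  rw [rpow2 (by positivity)] at this
  simpa [vext, h0] using this

private lemma L_kerbound (hbar : ℝ) (x y : ℝ) : ‖kerC hbar Q x y‖ ≤ 2 := by
  have h1 : Complex.I / (hbar:ℂ) * ((PhiP Q y - PhiP Q x : ℝ) : ℂ)
      = (((PhiP Q y - PhiP Q x)/hbar : ℝ) : ℂ) * Complex.I := by push_cast; ring
  have h2 : ‖Complex.exp (Complex.I / (hbar:ℂ) * ((PhiP Q y - PhiP Q x : ℝ) : ℂ))‖ = 1 := by
    rw [h1]
    exact Complex.norm_exp_ofReal_mul_I _
  calc ‖kerC hbar Q x y‖ ≤ ‖(1:ℂ)‖ + ‖Complex.exp _‖ := norm_sub_le _ _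
    _ = 2 := by rw [h2]; norm_num

private lemma L_intOn {h : ℝ → ℂ} (hc : Continuous h) {c : ℝ}
    (hb : ∀ y ∈ Ici (0:ℝ), ‖h y‖ ≤ c * ((1+y^2)^2)⁻¹) :
    IntegrableOn h (Ici 0) := by
  refine Integrable.mono' ((g_integrable.const_mul c).integrableOn)
    hc.aestronglyMeasurable.restrict ?_
  exact (ae_restrict_iff' measurableSet_Ici).2 (ae_of_all _ hb)

private lemma L_cont_tail {h : ℝ → ℂ} (hc : Continuous h) (hi : IntegrableOn h (Ici 0)) :
    Continuous fun x : ℝ => ∫ y in Ici (max x 0), h y := by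
  have key : ∀ x : ℝ, ∫ y in Ici (max x 0), h y
      = (∫ y in Ici (0:ℝ), h y) - ∫ y in (0:ℝ)..(max x 0), h y := by
    intro x
    set t := max x 0 with hts
    have ht : (0:ℝ) ≤ t := le_max_right _ _
    have hsplit : (Ico (0:ℝ) t) ∪ (Ici t) = Ici (0:ℝ) := Ico_union_Ici_eq_Ici ht
    have hdisj : Disjoint (Ico (0:ℝ) t) (Ici t) :=
      Set.disjoint_left.2 fun y hy hy' => absurd hy' (not_le.2 hy.2)
    have h1 : ∫ y in Ici (0:ℝ), h y = (∫ y in Ico (0:ℝ) t, h y) + ∫ y in Ici t, h y := by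
      rw [← hsplit, setIntegral_union hdisj measurableSet_Ici
        (hi.mono_set (by rw [← hsplit]; exact subset_union_left))
        (hi.mono_set (by rw [← hsplit]; exact subset_union_right))]
    have h2 : ∫ y in (0:ℝ)..t, h y = ∫ y in Ico (0:ℝ) t, h y := by
      rw [intervalIntegral.integral_of_le ht, integral_Ioc_eq_integral_Ioo,
        integral_Ico_eq_integral_Ioo]
    rw [h1, h2]; ring
  simp only [key]
  exact continuous_const.sub
    ((intervalIntegral.continuous_primitive (fun a b => hc.intervalIntegrable a b) 0).comp
      (continuous_id.max continuous_const))

private lemma L_est {hbar : ℝ} {Q : ℝ → ℝ} (hcQ : ContinuousOn Q (Ici 0))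
    {u : ℝ → ℂ} (hcu : Continuous u) {c : ℝ} (hc : 0 ≤ c)
    (hbu : ∀ y ∈ Ici (0:ℝ), ‖u y‖ ≤ c * ((1+y^2)^2)⁻¹) (x : ℝ) :
    ‖∫ y in Ici (max x 0), kerC hbar Q (max x 0) y * u y‖
      ≤ 2*c * ∫ y in Ici (max x 0), ((1+y^2)^2)⁻¹ := by
  set t := max x 0 with hts
  have ht : (0:ℝ) ≤ t := le_max_right _ _
  have hker : Continuous fun y => kerC hbar Q t y := by
    apply continuous_const.sub
    apply Complex.continuous_exp.comp
    exact continuous_const.mul ((Complex.continuous_ofReal.comp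
      ((L_Phicont hcQ).sub continuous_const)))
  have hbprod : ∀ y ∈ Ici (0:ℝ), ‖kerC hbar Q t y * u y‖ ≤ (2*c) * ((1+y^2)^2)⁻¹ := by
    intro y hy
    rw [norm_mul]
    calc ‖kerC hbar Q t y‖ * ‖u y‖ ≤ 2 * (c * ((1+y^2)^2)⁻¹) := by
          apply mul_le_mul (L_kerbound hbar t y) (hbu y hy) (norm_nonneg _) (by norm_num)
      _ = (2*c) * ((1+y^2)^2)⁻¹ := by ring
  have hint : IntegrableOn (fun y => kerC hbar Q t y * u y) (Ici t) :=
    (L_intOn (hker.mul hcu) hbprod).mono_set (Ici_subset_Ici.2 ht)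
  calc ‖∫ y in Ici t, kerC hbar Q t y * u y‖
      ≤ ∫ y in Ici t, ‖kerC hbar Q t y * u y‖ := norm_integral_le_integral_norm _
    _ ≤ ∫ y in Ici t, (2*c) * ((1+y^2)^2)⁻¹ := by
        apply setIntegral_mono_on hint.norm
          (((g_integrable.const_mul (2*c)).integrableOn)) measurableSet_Ici
        intro y hy
        exact hbprod y (le_trans ht hy)
    _ = 2*c * ∫ y in Ici t, ((1+y^2)^2)⁻¹ := integral_const_mul _ _

private lemma exp_norm_one (hbar r : ℝ) :
    ‖Complex.exp (Complex.I/(hbar:ℂ) * (r:ℂ))‖ = 1 := by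
  have h1 : Complex.I / (hbar:ℂ) * (r:ℂ) = (((r/hbar : ℝ)) : ℂ) * Complex.I := by
    push_cast; ring
  rw [h1]; exact Complex.norm_exp_ofReal_mul_I _

private lemma exp_norm_one' (hbar r : ℝ) :
    ‖Complex.exp (-(Complex.I/(hbar:ℂ)) * (r:ℂ))‖ = 1 := by
  have h1 : -(Complex.I / (hbar:ℂ)) * (r:ℂ) = (((-r/hbar : ℝ)) : ℂ) * Complex.I := by
    push_cast; ring
  rw [h1]; exact Complex.norm_exp_ofReal_mul_I _

private lemma L_decomp {hbar : ℝ} {V₂ : ℝ → ℂ} {Q : ℝ → ℝ} (f : ℝ → ℂ)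
    (hiu : IntegrableOn (fun y => vext V₂ y * (1+(hbar:ℂ)*f y)) (Ici 0))
    (hiw : IntegrableOn (fun y => Complex.exp (Complex.I/(hbar:ℂ) * ((PhiP Q y : ℝ):ℂ))
      * (vext V₂ y * (1+(hbar:ℂ)*f y))) (Ici 0)) (x : ℝ) :
    Tfun hbar V₂ Q f x = (∫ y in Ici (max x 0), vext V₂ y * (1+(hbar:ℂ)*f y))
      - Complex.exp (-(Complex.I/(hbar:ℂ)) * ((PhiP Q x : ℝ):ℂ)) *
        ∫ y in Ici (max x 0), Complex.exp (Complex.I/(hbar:ℂ) * ((PhiP Q y : ℝ):ℂ))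
          * (vext V₂ y * (1+(hbar:ℂ)*f y)) := by
  have ht : (0:ℝ) ≤ max x 0 := le_max_right _ _
  have hpt : ∀ y : ℝ, kerC hbar Q (max x 0) y * (vext V₂ y * (1+(hbar:ℂ)*f y))
      = (vext V₂ y * (1+(hbar:ℂ)*f y))
        - Complex.exp (-(Complex.I/(hbar:ℂ)) * ((PhiP Q x : ℝ):ℂ))
          * (Complex.exp (Complex.I/(hbar:ℂ) * ((PhiP Q y : ℝ):ℂ))
            * (vext V₂ y * (1+(hbar:ℂ)*f y))) := by
    intro y
    unfold kerC
    rw [L_Phimax]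
    have hsp : Complex.exp (Complex.I/(hbar:ℂ) * ((PhiP Q y - PhiP Q x : ℝ):ℂ))
        = Complex.exp (-(Complex.I/(hbar:ℂ)) * ((PhiP Q x : ℝ):ℂ))
          * Complex.exp (Complex.I/(hbar:ℂ) * ((PhiP Q y : ℝ):ℂ)) := by
      rw [← Complex.exp_add]; congr 1; push_cast; ring
    rw [hsp]; ring
  unfold Tfun
  simp only [hpt]
  rw [integral_sub (hiu.mono_set (Ici_subset_Ici.2 ht))
    ((hiw.mono_set (Ici_subset_Ici.2 ht)).const_mul _), integral_const_mul]

private lemma L_Tcont {hbar : ℝ} {V₂ : ℝ → ℂ} {Q : ℝ → ℝ}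
    (hcQ : ContinuousOn Q (Ici 0)) (hcV : ContinuousOn V₂ (Ici 0))
    (f : ℝ → ℂ) (hcf : Continuous f)
    (hiu : IntegrableOn (fun y => vext V₂ y * (1+(hbar:ℂ)*f y)) (Ici 0))
    (hiw : IntegrableOn (fun y => Complex.exp (Complex.I/(hbar:ℂ) * ((PhiP Q y : ℝ):ℂ))
      * (vext V₂ y * (1+(hbar:ℂ)*f y))) (Ici 0)) :
    Continuous (Tfun hbar V₂ Q f) := by
  have hd : Tfun hbar V₂ Q f = fun x => (∫ y in Ici (max x 0), vext V₂ y * (1+(hbar:ℂ)*f y))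
      - Complex.exp (-(Complex.I/(hbar:ℂ)) * ((PhiP Q x : ℝ):ℂ)) *
        ∫ y in Ici (max x 0), Complex.exp (Complex.I/(hbar:ℂ) * ((PhiP Q y : ℝ):ℂ))
          * (vext V₂ y * (1+(hbar:ℂ)*f y)) := funext (L_decomp f hiu hiw)
  have hcu : Continuous fun y => vext V₂ y * (1+(hbar:ℂ)*f y) :=
    (L_vcont hcV).mul (continuous_const.add (continuous_const.mul hcf))
  have hcw : Continuous fun y => Complex.exp (Complex.I/(hbar:ℂ) * ((PhiP Q y : ℝ):ℂ))
      * (vext V₂ y * (1+(hbar:ℂ)*f y)) :=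
    (Complex.continuous_exp.comp
      (continuous_const.mul (Complex.continuous_ofReal.comp (L_Phicont hcQ)))).mul hcu
  rw [hd]
  refine (L_cont_tail hcu hiu).sub (Continuous.mul ?_ (L_cont_tail hcw hiw))
  exact Complex.continuous_exp.comp
    (continuous_const.mul (Complex.continuous_ofReal.comp (L_Phicont hcQ)))

private lemma L_ubound {C hbar : ℝ} {V₂ : ℝ → ℂ} (hC : 0 ≤ C) (hb : 0 ≤ hbar)
    (hbV : ∀ y ∈ Ici (0:ℝ), ‖V₂ y‖ ≤ C * (1 + y ^ 2) ^ (-(2:ℝ)))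
    {f : ℝ → ℂ} {M : ℝ} (hfM : ∀ y, ‖f y‖ ≤ M) :
    ∀ y ∈ Ici (0:ℝ), ‖vext V₂ y * (1+(hbar:ℂ)*f y)‖
      ≤ (C*(1+hbar*M)) * ((1+y^2)^2)⁻¹ := by
  intro y hy
  have hM : 0 ≤ M := le_trans (norm_nonneg _) (hfM 0)
  rw [norm_mul]
  have h1 := L_vbound hbV y hy
  have h2 : ‖1+(hbar:ℂ)*f y‖ ≤ 1 + hbar*M := by
    calc ‖1+(hbar:ℂ)*f y‖ ≤ ‖(1:ℂ)‖ + ‖(hbar:ℂ)*f y‖ := norm_add_le _ _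
      _ = 1 + hbar*‖f y‖ := by
          rw [norm_one, norm_mul, Complex.norm_real, Real.norm_eq_abs, abs_of_nonneg hb]
      _ ≤ 1 + hbar*M := by nlinarith [hfM y, norm_nonneg (f y)]
  calc ‖vext V₂ y‖ * ‖1+(hbar:ℂ)*f y‖ ≤ (C * ((1+y^2)^2)⁻¹) * (1+hbar*M) := by
        apply mul_le_mul h1 h2 (norm_nonneg _) (mul_nonneg hC (by positivity))
    _ = (C*(1+hbar*M)) * ((1+y^2)^2)⁻¹ := by ring

private lemma L_wbound {C hbar : ℝ} {V₂ : ℝ → ℂ} {Q : ℝ → ℝ} (hC : 0 ≤ C) (hb : 0 ≤ hbar)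
    (hbV : ∀ y ∈ Ici (0:ℝ), ‖V₂ y‖ ≤ C * (1 + y ^ 2) ^ (-(2:ℝ)))
    {f : ℝ → ℂ} {M : ℝ} (hfM : ∀ y, ‖f y‖ ≤ M) :
    ∀ y ∈ Ici (0:ℝ), ‖Complex.exp (Complex.I/(hbar:ℂ) * ((PhiP Q y : ℝ):ℂ))
      * (vext V₂ y * (1+(hbar:ℂ)*f y))‖ ≤ (C*(1+hbar*M)) * ((1+y^2)^2)⁻¹ := by
  intro y hy
  rw [norm_mul, exp_norm_one, one_mul]
  exact L_ubound hC hb hbV hfM y hy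

private lemma L_kerint {hbar : ℝ} {Q : ℝ → ℝ} (hcQ : ContinuousOn Q (Ici 0))
    {u : ℝ → ℂ} (hcu : Continuous u) {c : ℝ}
    (hbu : ∀ y ∈ Ici (0:ℝ), ‖u y‖ ≤ c * ((1+y^2)^2)⁻¹) {t : ℝ} (ht : 0 ≤ t) :
    IntegrableOn (fun y => kerC hbar Q t y * u y) (Ici t) := by
  have hker : Continuous fun y => kerC hbar Q t y := by
    apply continuous_const.sub
    apply Complex.continuous_exp.comp
    exact continuous_const.mul ((Complex.continuous_ofReal.comp
      ((L_Phicont hcQ).sub continuous_const)))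
  have hbprod : ∀ y ∈ Ici (0:ℝ), ‖kerC hbar Q t y * u y‖ ≤ (2*c) * ((1+y^2)^2)⁻¹ := by
    intro y hy
    rw [norm_mul]
    calc ‖kerC hbar Q t y‖ * ‖u y‖ ≤ 2 * (c * ((1+y^2)^2)⁻¹) :=
          mul_le_mul (L_kerbound hbar t y) (hbu y hy) (norm_nonneg _) (by norm_num)
      _ = (2*c) * ((1+y^2)^2)⁻¹ := by ring
  exact (L_intOn (hker.mul hcu) hbprod).mono_set (Ici_subset_Ici.2 ht)

private lemma L_ker_eq {Q : ℝ → ℝ} (hcQ : ContinuousOn Q (Ici 0)) {x y : ℝ}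
    (hx : 0 ≤ x) (hxy : x ≤ y) :
    (∫ u in x..y, Real.sqrt (Q u)) = PhiP Q y - PhiP Q x := by
  have hy0 : 0 ≤ y := le_trans hx hxy
  have hq := L_qcont hcQ
  have h1 : ∫ u in x..y, Real.sqrt (Q u) = ∫ u in x..y, Real.sqrt (Q (max u 0)) := by
    apply intervalIntegral.integral_congr
    intro u hu
    rw [uIcc_of_le hxy] at hu
    simp only []
    rw [max_eq_left (le_trans hx hu.1)]
  have h2 : PhiP Q y = ∫ u in (0:ℝ)..y, Real.sqrt (Q (max u 0)) := by
    unfold PhiP; rw [max_eq_left hy0]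
  have h3 : PhiP Q x = ∫ u in (0:ℝ)..x, Real.sqrt (Q (max u 0)) := by
    unfold PhiP; rw [max_eq_left hx]
  rw [h1, h2, h3]
  rw [intervalIntegral.integral_interval_sub_left (hq.intervalIntegrable 0 y)
    (hq.intervalIntegrable 0 x)]
end lems


/-- Large-energy Volterra equation: with `|V₂(y)| ≤ C⟨y⟩⁻⁴`, `Q > 0` continuous
(so the phase is real and `|k(x,y)| ≤ 2` where
`k(x,y) = 1 - exp((i/ℏ)∫_x^y √Q)`), for `ℏ` small the equation
`a(x) = ∫_x^∞ k(x,y) V₂(y)(1 + ℏa(y)) dy` has a unique bounded continuous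
solution on `[0,∞)`, and it satisfies `|a(x)| ≤ C'⟨x⟩⁻³` with `C'` independent
of `ℏ` and `E`. -/
theorem stmt19 (C : ℝ) (hC : 0 < C) :
    ∃ hbar₀ > 0, ∃ C' > 0, ∀ hbar E : ℝ, 0 < hbar → hbar ≤ hbar₀ → 0 < E →
      ∀ (V₂ : ℝ → ℂ) (Q : ℝ → ℝ),
        ContinuousOn V₂ (Set.Ici 0) →
        (∀ y ∈ Set.Ici (0 : ℝ), ‖V₂ y‖ ≤ C * (1 + y ^ 2) ^ (-(2 : ℝ))) →
        ContinuousOn Q (Set.Ici 0) → (∀ u ∈ Set.Ici (0 : ℝ), 0 < Q u) →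
        ∃ a : ℝ → ℂ,
          (ContinuousOn a (Set.Ici 0) ∧ (∃ M : ℝ, ∀ x ∈ Set.Ici (0 : ℝ), ‖a x‖ ≤ M) ∧
            ∀ x ∈ Set.Ici (0 : ℝ),
              a x = ∫ y in Set.Ici x,
                (1 - Complex.exp (Complex.I / (hbar : ℂ) *
                    ((∫ u in x..y, Real.sqrt (Q u) : ℝ) : ℂ))) *
                  V₂ y * (1 + (hbar : ℂ) * a y)) ∧
          (∀ b : ℝ → ℂ,
            (ContinuousOn b (Set.Ici 0) ∧ (∃ M : ℝ, ∀ x ∈ Set.Ici (0 : ℝ), ‖b x‖ ≤ M) ∧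
              ∀ x ∈ Set.Ici (0 : ℝ),
                b x = ∫ y in Set.Ici x,
                  (1 - Complex.exp (Complex.I / (hbar : ℂ) *
                      ((∫ u in x..y, Real.sqrt (Q u) : ℝ) : ℂ))) *
                    V₂ y * (1 + (hbar : ℂ) * b y)) →
            Set.EqOn a b (Set.Ici 0)) ∧
          ∀ x ∈ Set.Ici (0 : ℝ), ‖a x‖ ≤ C' * (1 + x ^ 2) ^ (-(3 : ℝ) / 2) := by
  refine ⟨1/(16*C), by positivity, 16*C, by positivity, ?_⟩
  intro hbar E hb hb0 hE V₂ Q hcV hbV hcQ hQpos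
  have hbC : 8*C*hbar ≤ 1/2 := by
    rw [le_div_iff₀ (by positivity : (0:ℝ) < 16*C)] at hb0
    nlinarith
  -- tail facts
  have tail_nonneg : ∀ t : ℝ, 0 ≤ ∫ y in Ici t, ((1+y^2)^2)⁻¹ := fun t =>
    setIntegral_nonneg measurableSet_Ici (fun y _ => by positivity)
  have tail4 : ∀ x : ℝ, ∫ y in Ici (max x 0), ((1+y^2)^2)⁻¹ ≤ 4 := by
    intro x
    have h := tail_bound (le_max_right x 0)
    have h2 : (1+(max x 0)^2) ^ (-(3:ℝ)/2) ≤ 1 :=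
      Real.rpow_le_one_of_one_le_of_nonpos (by nlinarith [sq_nonneg (max x 0)]) (by norm_num)
    nlinarith
  -- continuity/ integrability packages
  have hcu : ∀ f : ℝ → ℂ, Continuous f →
      Continuous fun y => vext V₂ y * (1+(hbar:ℂ)*f y) := fun f hcf =>
    (L_vcont hcV).mul (continuous_const.add (continuous_const.mul hcf))
  have hiu : ∀ f : ℝ → ℂ, Continuous f → ∀ M : ℝ, (∀ y, ‖f y‖ ≤ M) →
      IntegrableOn (fun y => vext V₂ y * (1+(hbar:ℂ)*f y)) (Ici 0) := fun f hcf M hfM =>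
    L_intOn (hcu f hcf) (L_ubound hC.le hb.le hbV hfM)
  have hiw : ∀ f : ℝ → ℂ, Continuous f → ∀ M : ℝ, (∀ y, ‖f y‖ ≤ M) →
      IntegrableOn (fun y => Complex.exp (Complex.I/(hbar:ℂ) * ((PhiP Q y : ℝ):ℂ))
        * (vext V₂ y * (1+(hbar:ℂ)*f y))) (Ici 0) := fun f hcf M hfM =>
    L_intOn ((Complex.continuous_exp.comp
        (continuous_const.mul (Complex.continuous_ofReal.comp (L_Phicont hcQ)))).mul
        (hcu f hcf))
      (L_wbound hC.le hb.le hbV hfM)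
  have key_est : ∀ f : ℝ → ℂ, Continuous f → ∀ M : ℝ, (∀ y, ‖f y‖ ≤ M) → ∀ x : ℝ,
      ‖Tfun hbar V₂ Q f x‖ ≤ 2*(C*(1+hbar*M)) * ∫ y in Ici (max x 0), ((1+y^2)^2)⁻¹ := by
    intro f hcf M hfM x
    have hM : 0 ≤ M := le_trans (norm_nonneg _) (hfM 0)
    exact L_est hcQ (hcu f hcf) (by positivity) (L_ubound hC.le hb.le hbV hfM) x
  have Tb : ∀ f : ℝ → ℂ, Continuous f → ∀ M : ℝ, 0 ≤ M → (∀ y, ‖f y‖ ≤ M) → ∀ x : ℝ,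
      ‖Tfun hbar V₂ Q f x‖ ≤ 8*(C*(1+hbar*M)) := by
    intro f hcf M hM hfM x
    calc ‖Tfun hbar V₂ Q f x‖
        ≤ 2*(C*(1+hbar*M)) * ∫ y in Ici (max x 0), ((1+y^2)^2)⁻¹ := key_est f hcf M hfM x
      _ ≤ 2*(C*(1+hbar*M)) * 4 := by
          apply mul_le_mul_of_nonneg_left (tail4 x) (by positivity)
      _ = 8*(C*(1+hbar*M)) := by ring
  -- the map T
  set T : BoundedContinuousFunction ℝ ℂ → BoundedContinuousFunction ℝ ℂ := fun f =>
    BoundedContinuousFunction.ofNormedAddCommGroup (Tfun hbar V₂ Q f)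
      (L_Tcont hcQ hcV f f.continuous
        (hiu f f.continuous ‖f‖ f.norm_coe_le_norm)
        (hiw f f.continuous ‖f‖ f.norm_coe_le_norm))
      (8*(C*(1+hbar*‖f‖)))
      (Tb f f.continuous ‖f‖ (norm_nonneg f) f.norm_coe_le_norm) with hT_def
  have hTcoe : ∀ (f : BoundedContinuousFunction ℝ ℂ) (x : ℝ), T f x = Tfun hbar V₂ Q f x := by
    intro f x; rfl
  -- contraction
  have hlip : ∀ f g : BoundedContinuousFunction ℝ ℂ, dist (T f) (T g) ≤ (1/2) * dist f g := by
    intro f g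
    rw [BoundedContinuousFunction.dist_le (by positivity)]
    intro x
    rw [dist_eq_norm, hTcoe, hTcoe]
    have hdd : ∀ y : ℝ, ‖(f : ℝ → ℂ) y - g y‖ ≤ dist f g := by
      intro y; rw [← dist_eq_norm]; exact BoundedContinuousFunction.dist_coe_le_dist y
    have hdiff : Tfun hbar V₂ Q f x - Tfun hbar V₂ Q g x
        = ∫ y in Ici (max x 0), kerC hbar Q (max x 0) y *
            (vext V₂ y * ((hbar:ℂ) * ((f : ℝ → ℂ) y - g y))) := by
      unfold Tfun
      rw [← integral_sub
        (L_kerint hcQ (hcu f f.continuous) (L_ubound hC.le hb.le hbV f.norm_coe_le_norm)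
          (le_max_right x 0))
        (L_kerint hcQ (hcu g g.continuous) (L_ubound hC.le hb.le hbV g.norm_coe_le_norm)
          (le_max_right x 0))]
      congr 1; funext y; ring
    rw [hdiff]
    have hdb : ∀ y ∈ Ici (0:ℝ), ‖vext V₂ y * ((hbar:ℂ) * ((f : ℝ → ℂ) y - g y))‖
        ≤ (C*(hbar * dist f g)) * ((1+y^2)^2)⁻¹ := by
      intro y hy
      rw [norm_mul, norm_mul, Complex.norm_real, Real.norm_eq_abs, abs_of_nonneg hb.le]
      calc ‖vext V₂ y‖ * (hbar * ‖(f : ℝ → ℂ) y - g y‖)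
          ≤ (C * ((1+y^2)^2)⁻¹) * (hbar * dist f g) := by
            apply mul_le_mul (L_vbound hbV y hy)
              (mul_le_mul_of_nonneg_left (hdd y) hb.le)
              (by positivity) (by positivity)
        _ = (C*(hbar * dist f g)) * ((1+y^2)^2)⁻¹ := by ring
    calc ‖∫ y in Ici (max x 0), kerC hbar Q (max x 0) y *
            (vext V₂ y * ((hbar:ℂ) * ((f : ℝ → ℂ) y - g y)))‖
        ≤ 2*(C*(hbar * dist f g)) * ∫ y in Ici (max x 0), ((1+y^2)^2)⁻¹ :=
          L_est hcQ ((L_vcont hcV).mul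
            (continuous_const.mul (f.continuous.sub g.continuous)))
            (by positivity) hdb x
      _ ≤ 2*(C*(hbar * dist f g)) * 4 :=
          mul_le_mul_of_nonneg_left (tail4 x) (by positivity)
      _ = (8*C*hbar) * dist f g := by ring
      _ ≤ (1/2) * dist f g := mul_le_mul_of_nonneg_right hbC dist_nonneg
  have hcontr : ContractingWith (1/2 : NNReal) T := by
    constructor
    · rw [← NNReal.coe_lt_coe]; norm_num
    · apply LipschitzWith.of_dist_le_mul
      intro f g
      calc dist (T f) (T g) ≤ (1/2) * dist f g := hlip f g
        _ = ((1/2 : NNReal) : ℝ) * dist f g := by norm_num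
  set af : BoundedContinuousFunction ℝ ℂ := hcontr.fixedPoint T with haf_def
  have hfix : T af = af := hcontr.fixedPoint_isFixedPt
  have hfixx : ∀ x : ℝ, af x = Tfun hbar V₂ Q af x := by
    intro x
    conv_lhs => rw [← hfix]
    rw [hTcoe]
  -- norm bound
  have hnorm : ‖af‖ ≤ 16*C := by
    have h1 : ‖af‖ ≤ 8*C + (1/2)*‖af‖ := by
      rw [BoundedContinuousFunction.norm_le (by positivity)]
      intro x
      rw [hfixx x]
      calc ‖Tfun hbar V₂ Q af x‖ ≤ 8*(C*(1+hbar*‖af‖)) :=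
            Tb af af.continuous ‖af‖ (norm_nonneg af) af.norm_coe_le_norm x
        _ = 8*C + (8*C*hbar)*‖af‖ := by ring
        _ ≤ 8*C + (1/2)*‖af‖ :=
            add_le_add_right (mul_le_mul_of_nonneg_right hbC (norm_nonneg af)) _
    linarith
  -- the equation on Ici 0
  have heq : ∀ f : ℝ → ℂ, Continuous f → ∀ x : ℝ, 0 ≤ x →
      Tfun hbar V₂ Q f x = ∫ y in Ici x,
        (1 - Complex.exp (Complex.I / (hbar : ℂ) *
          ((∫ u in x..y, Real.sqrt (Q u) : ℝ) : ℂ))) * V₂ y * (1 + (hbar:ℂ) * f y) := by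
    intro f hcf x hx
    unfold Tfun
    rw [max_eq_left hx]
    apply setIntegral_congr_fun measurableSet_Ici
    intro y hy
    simp only []
    have hxy : x ≤ y := hy
    have hy0 : 0 ≤ y := le_trans hx hxy
    have hker : kerC hbar Q x y = 1 - Complex.exp (Complex.I / (hbar : ℂ) *
        ((∫ u in x..y, Real.sqrt (Q u) : ℝ) : ℂ)) := by
      unfold kerC
      rw [L_ker_eq hcQ hx hxy]
    rw [hker]
    unfold vext
    rw [max_eq_left hy0]
    ring
  refine ⟨fun x => af x, ⟨af.continuous.continuousOn, ⟨‖af‖, fun x _ => af.norm_coe_le_norm x⟩,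
    ?_⟩, ?_, ?_⟩
  · intro x hx
    simp only []
    rw [hfixx x, heq af af.continuous x hx]
  · -- uniqueness
    rintro b ⟨hcb, ⟨Mb, hMb⟩, heqb⟩
    have hcb' : Continuous fun x : ℝ => b (max x 0) :=
      hcb.comp_continuous (continuous_id.max continuous_const) max_mem
    have hbM' : ∀ x : ℝ, ‖b (max x 0)‖ ≤ Mb := fun x => hMb (max x 0) (le_max_right x 0)
    set bf : BoundedContinuousFunction ℝ ℂ :=
      BoundedContinuousFunction.ofNormedAddCommGroup _ hcb' Mb hbM' with hbf_def
    have hbcoe : ∀ x : ℝ, bf x = b (max x 0) := fun x => rfl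
    have hbfix : T bf = bf := by
      ext x
      rw [hTcoe, hbcoe x]
      have hx0 : (0:ℝ) ≤ max x 0 := le_max_right x 0
      rw [heqb (max x 0) hx0]
      unfold Tfun
      apply setIntegral_congr_fun measurableSet_Ici
      intro y hy
      simp only []
      have hxy : max x 0 ≤ y := hy
      have hy0 : (0:ℝ) ≤ y := le_trans hx0 hxy
      have hker : kerC hbar Q (max x 0) y = 1 - Complex.exp (Complex.I / (hbar : ℂ) *
          ((∫ u in (max x 0)..y, Real.sqrt (Q u) : ℝ) : ℂ)) := by
        unfold kerC; rw [L_ker_eq hcQ hx0 hxy]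
      rw [hker, hbcoe y]
      unfold vext
      rw [max_eq_left hy0]
      ring
    have : bf = af := hcontr.fixedPoint_unique hbfix
    intro x hx
    have h1 : af x = bf x := by rw [this]
    simp only []
    rw [h1, hbcoe x, max_eq_left hx]
  · -- decay
    intro x hx
    simp only []
    have h1 : ‖af x‖ ≤ 2*(C*(1+hbar*‖af‖)) * ∫ y in Ici (max x 0), ((1+y^2)^2)⁻¹ := by
      rw [hfixx x]
      exact key_est af af.continuous ‖af‖ af.norm_coe_le_norm x
    rw [max_eq_left hx] at h1
    have h2 : hbar * ‖af‖ ≤ 1 := by nlinarith [norm_nonneg af]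
    have h3 : ∫ y in Ici x, ((1+y^2)^2)⁻¹ ≤ 4 * (1+x^2) ^ (-(3:ℝ)/2) := tail_bound hx
    have h4 : (0:ℝ) ≤ (1+x^2) ^ (-(3:ℝ)/2) := Real.rpow_nonneg (by positivity) _
    calc ‖af x‖ ≤ 2*(C*(1+hbar*‖af‖)) * ∫ y in Ici x, ((1+y^2)^2)⁻¹ := h1
      _ ≤ 2*(C*2) * (4 * (1+x^2) ^ (-(3:ℝ)/2)) := by
          apply mul_le_mul (by nlinarith) h3 (tail_nonneg x) (by positivity)
      _ = 16*C * (1+x^2) ^ (-(3:ℝ)/2) := by ring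
end
end
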